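/- Let A(Bₙ) be the Artin group of type Bₙ (generators σ₁,...,σₙ with σ₁σ₂σ₁σ₂ = σ₂σ₁σ₂σ₁, σᵢσ_{i+1}σᵢ = σ_{i+1}σᵢσ_{i+1} for 2 ≤ i ≤ n-1, and σᵢσⱼ = σⱼσᵢ for |i-j| ≥ 2), n odd, and W = (C₂)ⁿ ⋊ Symₙ with w₀ = (-1,...,-1) central. Then the assignment σ₁ ↦ w₀s₁, σᵢ ↦ sᵢ (2 ≤ i ≤ n) extends to a group homomorphism μ' : A(Bₙ) → W whose image together with the center Z(W) generates W, but whose image is a proper subgroup of W. -/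
import Mathlib


/-- The action of `Symₙ` on `(C₂)ⁿ` by permuting coordinates. -/
def hyperAct (n : ℕ) : Equiv.Perm (Fin n) →* MulAut (Fin n → ℤˣ) where
  toFun π :=
    { toFun := fun v => v ∘ π.symm
      invFun := fun v => v ∘ π
      left_inv := fun v => by ext i; simp
      right_inv := fun v => by ext i; simp
      map_mul' := fun v w => rfl }
  map_one' := by ext v i; rfl
  map_mul' := fun π τ => by ext v i; rfl

/-- The hyperoctahedral group `(C₂)ⁿ ⋊ Symₙ` (Coxeter group of type Bₙ). -/
abbrev HypGroup (n : ℕ) := (Fin n → ℤˣ) ⋊[hyperAct n] Equiv.Perm (Fin n)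

/-- The sign vector with `-1` in position `i` and `1` elsewhere. -/
def eVec (n : ℕ) (i : Fin n) : Fin n → ℤˣ := fun j => if j = i then -1 else 1

/-- The longest element `w₀ = (-1, …, -1)`. -/
def hypW0 (n : ℕ) : HypGroup n := SemidirectProduct.inl (fun _ => -1)

/-- The standard Coxeter generators of type Bₙ: `s₁ = e₁` (sign change in the
first coordinate) and `sᵢ = (i-1, i)` for `i ≥ 2` (0-indexed here). -/
def sgen (n : ℕ) (i : Fin n) : HypGroup n :=
  if (i : ℕ) = 0 then SemidirectProduct.inl (eVec n i)
  else SemidirectProduct.inr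
    (Equiv.swap ⟨(i : ℕ) - 1, lt_of_le_of_lt (Nat.sub_le _ _) i.isLt⟩ i)

/-- The defining relations of the Artin group of type Bₙ (0-indexed generators
σ₀,…,σ_{n-1}): σ₀σ₁σ₀σ₁ = σ₁σ₀σ₁σ₀, σᵢσ_{i+1}σᵢ = σ_{i+1}σᵢσ_{i+1} for i ≥ 1,
and σᵢσⱼ = σⱼσᵢ for |i-j| ≥ 2. -/
def artinBRels (n : ℕ) : Set (FreeGroup (Fin n)) :=
  { r | (∃ i j : Fin n, (i : ℕ) = 0 ∧ (j : ℕ) = 1 ∧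
          r = (FreeGroup.of i * FreeGroup.of j) ^ 2 *
              ((FreeGroup.of j * FreeGroup.of i) ^ 2)⁻¹) ∨
        (∃ i j : Fin n, 1 ≤ (i : ℕ) ∧ (j : ℕ) = (i : ℕ) + 1 ∧
          r = FreeGroup.of i * FreeGroup.of j * FreeGroup.of i *
              (FreeGroup.of j * FreeGroup.of i * FreeGroup.of j)⁻¹) ∨
        (∃ i j : Fin n, (i : ℕ) + 2 ≤ (j : ℕ) ∧
          r = FreeGroup.of i * FreeGroup.of j *
              (FreeGroup.of j * FreeGroup.of i)⁻¹) }

section Aux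

open SemidirectProduct

/-- The "product of signs" character on `(C₂)ⁿ`. -/
def prodHom (n : ℕ) : (Fin n → ℤˣ) →* ℤˣ where
  toFun v := ∏ i, v i
  map_one' := by simp
  map_mul' a b := by simp [Finset.prod_mul_distrib]

/-- The "product of signs" character on the hyperoctahedral group. -/
def chi (n : ℕ) : HypGroup n →* ℤˣ :=
  SemidirectProduct.lift (prodHom n) 1 (fun π => by
    refine MonoidHom.ext fun v => ?_
    simp only [MonoidHom.comp_apply, MulEquiv.coe_toMonoidHom, MulAut.conj_apply,
      MonoidHom.one_apply, one_mul, inv_one, mul_one]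
    show prodHom n (fun i => v (π.symm i)) = prodHom n v
    simp only [prodHom, MonoidHom.coe_mk, OneHom.coe_mk]
    exact Equiv.prod_comp π.symm v)

@[simp] lemma chi_inl (n : ℕ) (v : Fin n → ℤˣ) : chi n (inl v) = ∏ i, v i := by
  simp [chi, prodHom]

@[simp] lemma chi_inr (n : ℕ) (π : Equiv.Perm (Fin n)) : chi n (inr π) = 1 := by
  simp [chi]

lemma prod_eVec (n : ℕ) (i : Fin n) : ∏ j, eVec n i j = -1 := by
  simp [eVec, Finset.prod_ite_eq']

lemma sgen_zero {n : ℕ} (i : Fin n) (hi : (i : ℕ) = 0) :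
    sgen n i = inl (eVec n i) := by
  rw [sgen, if_pos hi]

lemma sgen_swap {n : ℕ} (j : Fin n) (hj : ¬ (j : ℕ) = 0) (a : Fin n)
    (ha : (a : ℕ) = (j : ℕ) - 1) :
    sgen n j = inr (Equiv.swap a j) := by
  rw [sgen, if_neg hj]
  have : (⟨(j : ℕ) - 1, lt_of_le_of_lt (Nat.sub_le _ _) j.isLt⟩ : Fin n) = a :=
    Fin.ext ha.symm
  rw [this]

lemma hyperAct_sq {n : ℕ} (τ : Equiv.Perm (Fin n)) (hτ : τ * τ = 1)
    (u : Fin n → ℤˣ) : hyperAct n τ (hyperAct n τ u) = u := by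
  have h : (hyperAct n τ * hyperAct n τ) u = u := by
    rw [← map_mul, hτ, map_one]; rfl
  simpa using h

lemma sq_comm {n : ℕ} (u : Fin n → ℤˣ) (τ : Equiv.Perm (Fin n)) (hτ : τ * τ = 1) :
    (inl u * inr τ : HypGroup n) ^ 2 = (inr τ * inl u) ^ 2 := by
  rw [pow_two, pow_two]
  ext
  · simp [SemidirectProduct.mul_left, SemidirectProduct.mul_right,
      hyperAct_sq τ hτ, mul_comm]
  · simp [SemidirectProduct.mul_right]

lemma inl_inr_comm {n : ℕ} {v : Fin n → ℤˣ} {σ : Equiv.Perm (Fin n)}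
    (hv : hyperAct n σ v = v) :
    (inl v * inr σ : HypGroup n) = inr σ * inl v := by
  ext
  · simp [SemidirectProduct.mul_left, hv]
  · simp [SemidirectProduct.mul_right]

lemma braid {α : Type*} [DecidableEq α] (p i j : α) (hpi : p ≠ i) (hpj : p ≠ j)
    (hij : i ≠ j) :
    Equiv.swap p i * Equiv.swap i j * Equiv.swap p i
      = Equiv.swap i j * Equiv.swap p i * Equiv.swap i j := by
  have h1 : Equiv.swap i p * Equiv.swap j i * Equiv.swap i p = Equiv.swap p j :=
    Equiv.swap_mul_swap_mul_swap hij.symm (Ne.symm hpj)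
  have h2 : Equiv.swap i j * Equiv.swap p i * Equiv.swap i j = Equiv.swap j p :=
    Equiv.swap_mul_swap_mul_swap hpi hpj
  rw [Equiv.swap_comm i p, Equiv.swap_comm j i] at h1
  rw [Equiv.swap_comm j p] at h2
  rw [h1, h2]

lemma swap_commute {α : Type*} [DecidableEq α] {a b c d : α}
    (hac : a ≠ c) (had : a ≠ d) (hbc : b ≠ c) (hbd : b ≠ d) :
    Equiv.swap a b * Equiv.swap c d = Equiv.swap c d * Equiv.swap a b := by
  have hdisj : (Equiv.swap a b).Disjoint (Equiv.swap c d) := by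
    intro x
    rcases eq_or_ne x a with rfl | hxa
    · exact Or.inr (Equiv.swap_apply_of_ne_of_ne hac had)
    rcases eq_or_ne x b with rfl | hxb
    · exact Or.inr (Equiv.swap_apply_of_ne_of_ne hbc hbd)
    · exact Or.inl (Equiv.swap_apply_of_ne_of_ne hxa hxb)
  exact hdisj.commute

lemma hypW0_mem_center (n : ℕ) : hypW0 n ∈ Subgroup.center (HypGroup n) := by
  rw [Subgroup.mem_center_iff]
  intro g
  have hconst : ∀ π : Equiv.Perm (Fin n),
      hyperAct n π (fun _ => (-1 : ℤˣ)) = fun _ => -1 := fun π => rfl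
  apply SemidirectProduct.ext
  · show g.left * hyperAct n g.right (fun _ => (-1 : ℤˣ))
        = (fun _ => (-1 : ℤˣ)) * hyperAct n 1 g.left
    rw [hconst, map_one]
    exact mul_comm _ _
  · show g.right * 1 = 1 * g.right
    simp

end Aux

open scoped Pointwise

/-- For n odd, the assignment σ₁ ↦ w₀s₁, σᵢ ↦ sᵢ (i ≥ 2) extends
to a homomorphism μ' from the Artin group of type Bₙ to the hyperoctahedral
group W whose image together with the center Z(W) gives all of W
(Im(μ')·Z(W) = W), but whose image is a proper subgroup of W. -/
theorem stmt10 (n : ℕ) (hn : Odd n) :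
    ∃ μ' : PresentedGroup (artinBRels n) →* HypGroup n,
      (∀ i : Fin n, μ' (PresentedGroup.of i) =
        if (i : ℕ) = 0 then hypW0 n * sgen n i else sgen n i) ∧
      (∀ w : HypGroup n, ∃ h ∈ μ'.range,
        ∃ z ∈ Subgroup.center (HypGroup n), w = h * z) ∧
      μ'.range ≠ ⊤ := by
  classical
  have hn0 : 0 < n := Nat.pos_of_ne_zero (by rintro rfl; simp [Nat.odd_iff] at hn)
  set f : Fin n → HypGroup n :=
    fun i => if (i : ℕ) = 0 then hypW0 n * sgen n i else sgen n i with hf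
  have hfi0 : ∀ i : Fin n, (i : ℕ) = 0 →
      f i = SemidirectProduct.inl ((fun _ => (-1 : ℤˣ)) * eVec n i) := by
    intro i hi
    simp only [hf]
    rw [if_pos hi, sgen_zero i hi, hypW0, ← map_mul]
  have hfiS : ∀ i a : Fin n, ¬ (i : ℕ) = 0 → (a : ℕ) = (i : ℕ) - 1 →
      f i = SemidirectProduct.inr (Equiv.swap a i) := by
    intro i a hi ha
    simp only [hf]
    rw [if_neg hi, sgen_swap i hi a ha]
  have hrel : ∀ r ∈ artinBRels n, FreeGroup.lift f r = 1 := by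
    rintro r (⟨i, j, hi, hj, rfl⟩ | ⟨i, j, hi, hj, rfl⟩ | ⟨i, j, hij, rfl⟩)
    · have hjne : ¬ (j : ℕ) = 0 := by omega
      have ha : ((⟨0, hn0⟩ : Fin n) : ℕ) = (j : ℕ) - 1 := by simp [hj]
      simp only [map_mul, map_pow, map_inv, FreeGroup.lift_apply_of, mul_inv_eq_one,
        hfi0 i hi, hfiS j ⟨0, hn0⟩ hjne ha]
      exact sq_comm _ _ (Equiv.swap_mul_self _ _)
    · have hine : ¬ (i : ℕ) = 0 := by omega
      have hjne : ¬ (j : ℕ) = 0 := by omega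
      have hfi := hfiS i ⟨(i : ℕ) - 1, lt_of_le_of_lt (Nat.sub_le _ _) i.isLt⟩ hine rfl
      have hfj := hfiS j i hjne (by omega)
      simp only [map_mul, map_inv, FreeGroup.lift_apply_of, mul_inv_eq_one, hfi, hfj]
      simp only [← map_mul]
      rw [SemidirectProduct.inr_inj]
      exact braid _ i j (Fin.ne_of_val_ne (show (i : ℕ) - 1 ≠ (i : ℕ) by omega))
        (Fin.ne_of_val_ne (show (i : ℕ) - 1 ≠ (j : ℕ) by omega))
        (Fin.ne_of_val_ne (show (i : ℕ) ≠ (j : ℕ) by omega))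
    · rcases Nat.eq_zero_or_pos (i : ℕ) with hi0 | hipos
      · have hjne : ¬ (j : ℕ) = 0 := by omega
        have hfj := hfiS j ⟨(j : ℕ) - 1, lt_of_le_of_lt (Nat.sub_le _ _) j.isLt⟩ hjne rfl
        have hfi := hfi0 i hi0
        have hσi : Equiv.swap (⟨(j : ℕ) - 1, lt_of_le_of_lt (Nat.sub_le _ _) j.isLt⟩ : Fin n) j i = i :=
          Equiv.swap_apply_of_ne_of_ne
            (Fin.ne_of_val_ne (show (i : ℕ) ≠ (j : ℕ) - 1 by omega))
            (Fin.ne_of_val_ne (show (i : ℕ) ≠ (j : ℕ) by omega))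
        have hv : hyperAct n (Equiv.swap (⟨(j : ℕ) - 1, lt_of_le_of_lt (Nat.sub_le _ _) j.isLt⟩ : Fin n) j)
            ((fun _ => (-1 : ℤˣ)) * eVec n i) = (fun _ => (-1 : ℤˣ)) * eVec n i := by
          set a : Fin n := ⟨(j : ℕ) - 1, lt_of_le_of_lt (Nat.sub_le _ _) j.isLt⟩
          funext k
          show (((fun _ => (-1 : ℤˣ)) * eVec n i : Fin n → ℤˣ)) ((Equiv.swap a j).symm k)
              = (((fun _ => (-1 : ℤˣ)) * eVec n i : Fin n → ℤˣ)) k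
          rw [Equiv.symm_swap]
          by_cases hk : k = i
          · subst hk; rw [hσi]
          · have hne : Equiv.swap a j k ≠ i := by
              intro h
              exact hk ((Equiv.swap a j).injective (h.trans hσi.symm))
            simp [eVec, hk, hne]
        simp only [map_mul, FreeGroup.lift_apply_of, map_inv, mul_inv_eq_one, hfi, hfj]
        exact inl_inr_comm hv
      · have hine : ¬ (i : ℕ) = 0 := by omega
        have hjne : ¬ (j : ℕ) = 0 := by omega
        have hfi := hfiS i ⟨(i : ℕ) - 1, lt_of_le_of_lt (Nat.sub_le _ _) i.isLt⟩ hine rfl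
        have hfj := hfiS j ⟨(j : ℕ) - 1, lt_of_le_of_lt (Nat.sub_le _ _) j.isLt⟩ hjne rfl
        simp only [map_mul, FreeGroup.lift_apply_of, map_inv, mul_inv_eq_one, hfi, hfj]
        simp only [← map_mul]
        rw [SemidirectProduct.inr_inj]
        exact swap_commute
          (Fin.ne_of_val_ne (show (i : ℕ) - 1 ≠ (j : ℕ) - 1 by omega))
          (Fin.ne_of_val_ne (show (i : ℕ) - 1 ≠ (j : ℕ) by omega))
          (Fin.ne_of_val_ne (show (i : ℕ) ≠ (j : ℕ) - 1 by omega))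
          (Fin.ne_of_val_ne (show (i : ℕ) ≠ (j : ℕ) by omega))
  let μ' : PresentedGroup (artinBRels n) →* HypGroup n := PresentedGroup.toGroup hrel
  have hμof : ∀ i : Fin n, μ' (PresentedGroup.of i) = f i :=
    fun i => PresentedGroup.toGroup.of hrel
  refine ⟨μ', fun i => hμof i, ?_, ?_⟩
  · -- surjectivity modulo the center
    set K : Subgroup (HypGroup n) := μ'.range ⊔ Subgroup.center (HypGroup n) with hK
    have hcenterK : Subgroup.center (HypGroup n) ≤ K := le_sup_right
    have hW0K : hypW0 n ∈ K := hcenterK (hypW0_mem_center n)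
    have hfK : ∀ i : Fin n, f i ∈ K := fun i =>
      (le_sup_left : μ'.range ≤ K) ⟨PresentedGroup.of i, hμof i⟩
    have hsgenK : ∀ i : Fin n, sgen n i ∈ K := by
      intro i
      by_cases hi : (i : ℕ) = 0
      · have h1 := hfK i
        simp only [hf] at h1
        rw [if_pos hi] at h1
        have h2 : sgen n i = (hypW0 n)⁻¹ * (hypW0 n * sgen n i) := by group
        rw [h2]
        exact K.mul_mem (K.inv_mem hW0K) h1
      · have h1 := hfK i
        simp only [hf] at h1
        rwa [if_neg hi] at h1
    set M : Subgroup (Equiv.Perm (Fin n)) :=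
      K.comap (SemidirectProduct.inr : Equiv.Perm (Fin n) →* HypGroup n) with hM
    have hswapM : ∀ a b : Fin n, Equiv.swap a b ∈ M := by
      have key : ∀ d : ℕ, ∀ a b : Fin n, (b : ℕ) = (a : ℕ) + d →
          Equiv.swap a b ∈ M := by
        intro d
        induction d with
        | zero =>
          intro a b hab
          rw [show b = a from Fin.ext (by omega), Equiv.swap_self]
          exact M.one_mem
        | succ d ih =>
          intro a b hab
          have hcn : (a : ℕ) + d < n := by have := b.isLt; omega
          have hac : Equiv.swap a ⟨(a : ℕ) + d, hcn⟩ ∈ M := ih a _ rfl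
          have hcb : Equiv.swap (⟨(a : ℕ) + d, hcn⟩ : Fin n) b ∈ M := by
            rw [hM, Subgroup.mem_comap,
              ← sgen_swap b (by omega) ⟨(a : ℕ) + d, hcn⟩ (by simp; omega)]
            exact hsgenK b
          exact SubmonoidClass.swap_mem_trans M hac hcb
      intro a b
      rcases le_or_gt (a : ℕ) (b : ℕ) with h | h
      · exact key ((b : ℕ) - (a : ℕ)) a b (by omega)
      · rw [Equiv.swap_comm]
        exact key ((a : ℕ) - (b : ℕ)) b a (by omega)
    have hinrK : ∀ π : Equiv.Perm (Fin n), SemidirectProduct.inr π ∈ K := by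
      intro π
      have h1 : Subgroup.closure {σ : Equiv.Perm (Fin n) | σ.IsSwap} ≤ M := by
        rw [Subgroup.closure_le]
        rintro σ ⟨x, y, hxy, rfl⟩
        exact hswapM x y
      have h2 : π ∈ M := h1 (by rw [Equiv.Perm.closure_isSwap]; exact Subgroup.mem_top π)
      rwa [hM, Subgroup.mem_comap] at h2
    have heVecK : ∀ i : Fin n, SemidirectProduct.inl (eVec n i) ∈ K := by
      suffices key : ∀ m : ℕ, ∀ i : Fin n, (i : ℕ) = m →
          SemidirectProduct.inl (eVec n i) ∈ K by
        intro i; exact key (i : ℕ) i rfl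
      intro m
      induction m with
      | zero =>
        intro i hi
        rw [← sgen_zero i hi]
        exact hsgenK i
      | succ m ih =>
        intro i hi
        have hpn : m < n := by have := i.isLt; omega
        set p : Fin n := ⟨m, hpn⟩ with hp
        have hpK := ih p rfl
        have hpi : p ≠ i := Fin.ne_of_val_ne (show m ≠ (i : ℕ) by omega)
        have hσ : hyperAct n (Equiv.swap p i) (eVec n p) = eVec n i := by
          funext k
          show eVec n p ((Equiv.swap p i).symm k) = eVec n i k
          rw [Equiv.symm_swap]
          by_cases hk : k = i
          · subst hk
            rw [Equiv.swap_apply_right]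
            simp [eVec]
          · have h2 : Equiv.swap p i k ≠ p := by
              intro h
              have h3 := congrArg (Equiv.swap p i) h
              rw [Equiv.swap_apply_self, Equiv.swap_apply_left] at h3
              exact hk h3
            simp [eVec, hk, h2]
        rw [← hσ, SemidirectProduct.inl_aut]
        exact K.mul_mem (K.mul_mem (hinrK _) hpK) (K.inv_mem (hinrK _))
    have hinlK : ∀ v : Fin n → ℤˣ, SemidirectProduct.inl v ∈ K := by
      intro v
      set L : Subgroup (Fin n → ℤˣ) :=
        K.comap (SemidirectProduct.inl : (Fin n → ℤˣ) →* HypGroup n) with hL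
      have hv : v = ∏ i : Fin n, (if v i = -1 then eVec n i else 1) := by
        funext k
        rw [Finset.prod_apply, Finset.prod_eq_single k]
        · rcases Int.units_eq_one_or (v k) with h | h <;> simp [h, eVec]
        · intro b _ hbk
          by_cases hb : v b = -1 <;> simp [hb, eVec, Ne.symm hbk]
        · intro h; exact absurd (Finset.mem_univ k) h
      have hvL : v ∈ L := by
        rw [hv]
        refine Subgroup.prod_mem L fun i _ => ?_
        by_cases hvi : v i = -1
        · simp only [if_pos hvi]
          rw [hL, Subgroup.mem_comap]
          exact heVecK i
        · simp only [if_neg hvi]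
          exact L.one_mem
      rwa [hL, Subgroup.mem_comap] at hvL
    intro w
    have hw : w ∈ K := by
      rw [← SemidirectProduct.inl_left_mul_inr_right w]
      exact K.mul_mem (hinlK _) (hinrK _)
    rw [hK] at hw
    have hw2 : w ∈ (μ'.range : Set (HypGroup n)) * (Subgroup.center (HypGroup n) : Set (HypGroup n)) := by
      rw [← Subgroup.mul_normal]
      exact hw
    obtain ⟨h, hh, z, hz, hhz⟩ := Set.mem_mul.mp hw2
    exact ⟨h, hh, z, hz, hhz.symm⟩
  · -- properness
    intro htop
    have hchi1 : ∀ x ∈ μ'.range, chi n x = 1 := by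
      rintro x ⟨y, rfl⟩
      have hcomp : (chi n).comp μ' = 1 := by
        apply PresentedGroup.ext
        intro i
        simp only [MonoidHom.comp_apply, MonoidHom.one_apply, hμof i]
        by_cases hi : (i : ℕ) = 0
        · rw [hfi0 i hi, chi_inl]
          simp only [Pi.mul_apply]
          rw [Finset.prod_mul_distrib, prod_eVec, Finset.prod_const]
          simp [Finset.card_univ, hn.neg_one_pow]
        · rw [hfiS i ⟨(i : ℕ) - 1, lt_of_le_of_lt (Nat.sub_le _ _) i.isLt⟩ hi rfl,
            chi_inr]
      calc chi n (μ' y) = ((chi n).comp μ') y := rfl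
        _ = 1 := by rw [hcomp]; rfl
    have h0 : SemidirectProduct.inl (eVec n ⟨0, hn0⟩) ∈ μ'.range := by
      rw [htop]; trivial
    have h1 := hchi1 _ h0
    rw [chi_inl, prod_eVec] at h1
    exact absurd h1 (by decide)
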